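/- Let β ∈ (0,1), γ ∈ (0,1), ρ > γ, and a ∈ ℝ, and set y_{β,ρ}(t) = t^{ρ−1} E_{β,ρ}(a t^β). Then for every t > 0, the function u(s) = I^{1−γ} y_{β,ρ}(s) = (1/Γ(1−γ)) ∫₀ˢ (s−r)^{−γ} y_{β,ρ}(r) dr is differentiable at t with u′(t) = t^{ρ−γ−1} E_{β,ρ−γ}(a t^β); that is, the Riemann–Liouville derivative satisfies D^γ y_{β,ρ}(t) = y_{β,ρ−γ}(t). -/

import Mathlib

/-- The Riemann–Liouville fractional integral
`I^p f(t) = (1/Γ(p)) ∫₀ᵗ (t−s)^{p−1} f(s) ds`. -/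
noncomputable def rlInt (p : ℝ) (f : ℝ → ℝ) (t : ℝ) : ℝ :=
  (1 / Real.Gamma p) * ∫ s in (0:ℝ)..t, (t - s) ^ (p - 1) * f s

/-- The two-parameter Mittag-Leffler function
`E_{β,ρ}(z) = ∑_{k=0}^∞ z^k / Γ(βk + ρ)`. -/
noncomputable def mittagLeffler (β ρ z : ℝ) : ℝ :=
  ∑' k : ℕ, z ^ k / Real.Gamma (β * k + ρ)


open Real MeasureTheory Filter intervalIntegral Set



/-- Log-convexity gives `Γ(y+β) ≥ (y-1)^β Γ(y)` for `y > 1`, `β > 0`. -/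
lemma gamma_ratio_lb {β y : ℝ} (hβ : 0 < β) (hy : 1 < y) :
    (y - 1) ^ β * Real.Gamma y ≤ Real.Gamma (y + β) := by
  have h0 : (0:ℝ) < y - 1 := by linarith
  have hyy : (0:ℝ) < y := by linarith
  have hG1 : 0 < Real.Gamma (y - 1) := Real.Gamma_pos_of_pos h0
  have hGy : 0 < Real.Gamma y := Real.Gamma_pos_of_pos hyy
  have hGyβ : 0 < Real.Gamma (y + β) := Real.Gamma_pos_of_pos (by linarith)
  have hslope := Real.convexOn_log_Gamma.slope_mono_adjacent
    (x := y - 1) (y := y) (z := y + β) (mem_Ioi.2 h0) (mem_Ioi.2 (by linarith))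
    (by linarith) (by linarith)
  simp only [Function.comp] at hslope
  have hGam : Real.Gamma y = (y - 1) * Real.Gamma (y - 1) := by
    have := Real.Gamma_add_one (ne_of_gt h0)
    rw [sub_add_cancel] at this
    exact this
  have hlog : Real.log (Real.Gamma y) - Real.log (Real.Gamma (y-1)) = Real.log (y - 1) := by
    rw [hGam, Real.log_mul (ne_of_gt h0) (ne_of_gt hG1)]; ring
  have h1 : (y : ℝ) - (y - 1) = 1 := by ring
  rw [h1, div_one, hlog] at hslope
  have h2 : (y + β) - y = β := by ring
  rw [h2, le_div_iff₀ hβ] at hslope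
  -- hslope : log (y-1) * β ≤ log Γ(y+β) - log Γ(y)
  have : Real.log ((y-1)^β * Real.Gamma y) ≤ Real.log (Real.Gamma (y + β)) := by
    rw [Real.log_mul (by positivity) (ne_of_gt hGy), Real.log_rpow h0]
    linarith
  exact (Real.log_le_log_iff (by positivity) hGyβ).1 this

/-- Summability of Mittag-Leffler type series. -/
lemma ml_summable {β c x : ℝ} (hβ : 0 < β) (hc : 0 < c) (hx : 0 ≤ x) :
    Summable (fun k : ℕ => x ^ k / Real.Gamma (β * k + c)) := by
  apply summable_of_ratio_norm_eventually_le (r := 1/2) (by norm_num)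
  have htend : Tendsto (fun k : ℕ => β * k + c) atTop atTop := by
    apply tendsto_atTop_add_const_right
    exact Tendsto.const_mul_atTop hβ tendsto_natCast_atTop_atTop
  filter_upwards [htend.eventually_ge_atTop (max 2 ((2*x+1) ^ (1/β) + 1))] with k hk
  set y := β * k + c with hy
  have hy2 : 2 ≤ y := le_trans (le_max_left _ _) hk
  have hy1 : 1 < y := by linarith
  have hpow : 2 * x + 1 ≤ (y - 1) ^ β := by
    have h1 : (2*x+1) ^ (1/β) ≤ y - 1 := by
      have := le_trans (le_max_right _ _) hk; linarith
    calc 2*x+1 = ((2*x+1) ^ (1/β)) ^ β := by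
          rw [← Real.rpow_mul (by positivity), one_div,
            inv_mul_cancel₀ (ne_of_gt hβ), Real.rpow_one]
      _ ≤ (y - 1) ^ β := Real.rpow_le_rpow (by positivity) h1 (le_of_lt hβ)
  have hGy : 0 < Real.Gamma y := Real.Gamma_pos_of_pos (by linarith)
  have hGyβ : 0 < Real.Gamma (y + β) := Real.Gamma_pos_of_pos (by linarith)
  have hkey : (2*x+1) * Real.Gamma y ≤ Real.Gamma (y + β) := by
    calc (2*x+1) * Real.Gamma y ≤ (y-1)^β * Real.Gamma y := by
          apply mul_le_mul_of_nonneg_right hpow (le_of_lt hGy)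
      _ ≤ Real.Gamma (y + β) := gamma_ratio_lb hβ hy1
  have harg : β * ((k:ℕ)+1 : ℕ) + c = y + β := by push_cast; ring
  rw [harg]
  have hxk : (0:ℝ) ≤ x ^ k := pow_nonneg hx k
  rw [Real.norm_eq_abs, Real.norm_eq_abs, abs_of_nonneg (by positivity),
    abs_of_nonneg (by positivity)]
  rw [pow_succ, div_le_iff₀ hGyβ]
  calc x ^ k * x = x ^ k / Real.Gamma y * (x * Real.Gamma y) := by
        field_simp
    _ ≤ x ^ k / Real.Gamma y * ((1/2) * Real.Gamma (y + β)) := by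
        apply mul_le_mul_of_nonneg_left _ (by positivity)
        nlinarith
    _ = 1/2 * (x ^ k / Real.Gamma y) * Real.Gamma (y + β) := by ring



/-- Integrability of the Beta integrand. -/
lemma beta_integrable {p q s : ℝ} (hp : 0 < p) (hq : 0 < q) (hs : 0 < s) :
    IntervalIntegrable (fun r => (s - r) ^ (p - 1) * r ^ (q - 1)) volume 0 s := by
  have h1 : IntervalIntegrable (fun r => (s - r) ^ (p - 1) * r ^ (q - 1)) volume 0 (s/2) := by
    have hint : IntervalIntegrable (fun r : ℝ => r ^ (q - 1)) volume 0 (s/2) :=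
      intervalIntegral.intervalIntegrable_rpow' (by linarith)
    have hcont : ContinuousOn (fun r : ℝ => (s - r) ^ (p - 1)) (uIcc 0 (s/2)) := by
      apply ContinuousOn.rpow_const
      · exact (continuous_const.sub continuous_id).continuousOn
      · intro x hx
        rw [uIcc_of_le (by linarith)] at hx
        left; simp only [mem_Icc] at hx; intro h; linarith [hx.2]
    exact hint.continuousOn_mul hcont
  have h2 : IntervalIntegrable (fun r => (s - r) ^ (p - 1) * r ^ (q - 1)) volume (s/2) s := by
    have hint : IntervalIntegrable (fun r : ℝ => (s - r) ^ (p - 1)) volume (s/2) s := by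
      have base : IntervalIntegrable (fun r : ℝ => r ^ (p - 1)) volume 0 (s/2) :=
        intervalIntegral.intervalIntegrable_rpow' (by linarith)
      have h := (base.comp_sub_left s).symm
      have e1 : s - 0 = s := by ring
      have e2 : s - s/2 = s/2 := by ring
      rwa [e1, e2] at h
    have hcont : ContinuousOn (fun r : ℝ => r ^ (q - 1)) (uIcc (s/2) s) := by
      apply ContinuousOn.rpow_const continuous_id.continuousOn
      intro x hx
      rw [uIcc_of_le (by linarith)] at hx
      simp only [mem_Icc] at hx
      left; simp only [id]; intro h; linarith [hx.1]
    exact hint.mul_continuousOn hcont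
  exact h1.trans h2

/-- The real Beta integral evaluation. -/
lemma beta_integral_eval {p q s : ℝ} (hp : 0 < p) (hq : 0 < q) (hs : 0 < s) :
    ∫ r in (0:ℝ)..s, (s - r) ^ (p - 1) * r ^ (q - 1)
      = Real.Gamma p * Real.Gamma q / Real.Gamma (p + q) * s ^ (p + q - 1) := by
  have hqc : (0:ℝ) < Complex.re (q : ℂ) := by simpa using hq
  have hpc : (0:ℝ) < Complex.re (p : ℂ) := by simpa using hp
  have hscaled := Complex.betaIntegral_scaled (q : ℂ) (p : ℂ) hs
  have hbeta := Complex.Gamma_mul_Gamma_eq_betaIntegral hqc hpc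
  have hGne : Complex.Gamma ((q : ℂ) + p) ≠ 0 :=
    Complex.Gamma_ne_zero_of_re_pos (by simp; linarith)
  have hBval : Complex.betaIntegral (q : ℂ) (p : ℂ)
      = Complex.Gamma q * Complex.Gamma p / Complex.Gamma ((q:ℂ) + p) := by
    rw [hbeta]; field_simp
  have hcong : (∫ x in (0:ℝ)..s, (x:ℂ) ^ ((q:ℂ) - 1) * ((s:ℂ) - x) ^ ((p:ℂ) - 1))
      = ((∫ r in (0:ℝ)..s, (s - r) ^ (p - 1) * r ^ (q - 1) : ℝ) : ℂ) := by
    rw [← intervalIntegral.integral_ofReal]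
    apply intervalIntegral.integral_congr
    intro x hx
    rw [uIcc_of_le hs.le] at hx
    obtain ⟨hx0, hxs⟩ := hx
    have e1 : ((q:ℂ) - 1) = ((q - 1 : ℝ) : ℂ) := by push_cast; ring
    have e2 : ((p:ℂ) - 1) = ((p - 1 : ℝ) : ℂ) := by push_cast; ring
    have e3 : ((s:ℂ) - (x:ℂ)) = ((s - x : ℝ) : ℂ) := by push_cast; ring
    show (x:ℂ) ^ ((q:ℂ) - 1) * ((s:ℂ) - x) ^ ((p:ℂ) - 1)
      = (((s - x) ^ (p - 1) * x ^ (q - 1) : ℝ) : ℂ)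
    rw [e1, e2, e3, ← Complex.ofReal_cpow hx0, ← Complex.ofReal_cpow (by linarith)]
    push_cast
    ring
  have key : ((∫ r in (0:ℝ)..s, (s - r) ^ (p - 1) * r ^ (q - 1) : ℝ) : ℂ)
      = ((Real.Gamma p * Real.Gamma q / Real.Gamma (p + q) * s ^ (p + q - 1) : ℝ) : ℂ) := by
    rw [← hcong, hscaled, hBval]
    rw [show ((q:ℂ) + (p:ℂ) - 1) = ((q + p - 1 : ℝ) : ℂ) by push_cast; ring,
      show ((q:ℂ) + (p:ℂ)) = ((q + p : ℝ) : ℂ) by push_cast; ring,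
      ← Complex.ofReal_cpow hs.le, Complex.Gamma_ofReal, Complex.Gamma_ofReal,
      Complex.Gamma_ofReal]
    push_cast
    ring
  exact_mod_cast key

/-- rpow juggling: `(x * s^β)^k = x^k * s^(β k)` for `s > 0`. -/
lemma pow_rpow_eq {β s : ℝ} (x : ℝ) (hs : 0 < s) (k : ℕ) :
    (x * s ^ β) ^ k = x ^ k * s ^ (β * k) := by
  rw [mul_pow, ← Real.rpow_natCast (s ^ β) k, ← Real.rpow_mul hs.le]

lemma ml_summable' {β c d x s : ℝ} (hβ : 0 < β) (hc : 0 < c) (hx : 0 ≤ x) (hs : 0 < s) :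
    Summable (fun k : ℕ => x ^ k * s ^ (β * k + d) / Real.Gamma (β * k + c)) := by
  have h := (ml_summable (x := x * s ^ β) hβ hc (by positivity)).mul_left (s ^ d)
  apply h.congr
  intro k
  rw [pow_rpow_eq x hs k, Real.rpow_add hs]
  field_simp

/-- Closed form of the fractional integral of `y_{β,ρ}` for positive `s`. -/
lemma rlInt_ml_eq {β ρ γ a : ℝ} (hβ0 : 0 < β) (hγ0 : 0 < γ) (hγ1 : γ < 1) (hργ : γ < ρ)
    {s : ℝ} (hs : 0 < s) :
    rlInt (1 - γ) (fun r => r ^ (ρ - 1) * mittagLeffler β ρ (a * r ^ β)) s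
      = ∑' k : ℕ, a ^ k * s ^ (β * k + ρ - γ) / Real.Gamma (β * k + ρ + 1 - γ) := by
  have hρ : 0 < ρ := lt_trans hγ0 hργ
  set p := 1 - γ with hp
  have hp0 : 0 < p := by simp [hp]; linarith
  set F : ℕ → ℝ → ℝ := fun k r =>
    (a ^ k / Real.Gamma (β * k + ρ)) * ((s - r) ^ (p - 1) * r ^ ((β * k + ρ) - 1)) with hF
  have hq0 : ∀ k : ℕ, (0:ℝ) < β * k + ρ := fun k => by positivity
  -- pointwise identity on Ioc 0 s
  have hpt : ∀ r ∈ Ioc (0:ℝ) s,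
      (s - r) ^ (p - 1) * (r ^ (ρ - 1) * mittagLeffler β ρ (a * r ^ β)) = ∑' k, F k r := by
    intro r hr
    obtain ⟨hr0, hrs⟩ := hr
    rw [mittagLeffler, ← tsum_mul_left, ← tsum_mul_left]
    apply tsum_congr
    intro k
    have hGk : Real.Gamma (β * k + ρ) ≠ 0 := ne_of_gt (Real.Gamma_pos_of_pos (hq0 k))
    rw [hF]
    beta_reduce
    rw [pow_rpow_eq a hr0 k]
    rw [show r ^ (β * k + ρ - 1) = r ^ (β * k) * r ^ (ρ - 1) by
      rw [← Real.rpow_add hr0]; ring_nf]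
    field_simp
  -- each F k is integrable on Ioc 0 s
  have hFint : ∀ k : ℕ, IntegrableOn (F k) (Ioc 0 s) volume := by
    intro k
    exact ((beta_integrable hp0 (hq0 k) hs).1).const_mul _
  -- the integral of ‖F k‖
  have hFnorm : ∀ k : ℕ, ∫ r in Ioc (0:ℝ) s, ‖F k r‖
      = (|a| ^ k / Real.Gamma (β * k + ρ)) *
        (Real.Gamma p * Real.Gamma (β * k + ρ) / Real.Gamma (p + (β * k + ρ)) *
          s ^ (p + (β * k + ρ) - 1)) := by
    intro k
    have : ∀ r ∈ Ioc (0:ℝ) s, ‖F k r‖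
        = (|a| ^ k / Real.Gamma (β * k + ρ)) * ((s - r) ^ (p - 1) * r ^ ((β * k + ρ) - 1)) := by
      intro r hr
      obtain ⟨hr0, hrs⟩ := hr
      rw [hF, Real.norm_eq_abs, abs_mul, abs_div, abs_pow,
        abs_of_nonneg (Real.Gamma_pos_of_pos (hq0 k)).le,
        abs_of_nonneg (mul_nonneg (Real.rpow_nonneg (by linarith) _)
          (Real.rpow_nonneg hr0.le _))]
    rw [setIntegral_congr_fun measurableSet_Ioc this, MeasureTheory.integral_const_mul,
      ← intervalIntegral.integral_of_le hs.le, beta_integral_eval hp0 (hq0 k) hs]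
  -- the integral of F k
  have hFval : ∀ k : ℕ, ∫ r in Ioc (0:ℝ) s, F k r
      = (a ^ k / Real.Gamma (β * k + ρ)) *
        (Real.Gamma p * Real.Gamma (β * k + ρ) / Real.Gamma (p + (β * k + ρ)) *
          s ^ (p + (β * k + ρ) - 1)) := by
    intro k
    rw [hF, MeasureTheory.integral_const_mul, ← intervalIntegral.integral_of_le hs.le,
      beta_integral_eval hp0 (hq0 k) hs]
  -- summability of norms
  have hFsum : Summable fun k : ℕ => ∫ r in Ioc (0:ℝ) s, ‖F k r‖ := by
    apply ((ml_summable' (d := ρ - γ) (c := ρ + 1 - γ) (x := |a|) hβ0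
      (by linarith) (abs_nonneg a) hs).mul_left (Real.Gamma p)).congr
    intro k
    rw [hFnorm k]
    have hG : Real.Gamma (β * k + ρ) ≠ 0 := ne_of_gt (Real.Gamma_pos_of_pos (hq0 k))
    rw [show p + (β * k + ρ) - 1 = β * k + ρ - γ by rw [hp]; ring,
      show p + (β * k + ρ) = β * k + (ρ + 1 - γ) by rw [hp]; ring]
    have hG2 : Real.Gamma (β * k + (ρ + 1 - γ)) ≠ 0 :=
      ne_of_gt (Real.Gamma_pos_of_pos (by have := hq0 k; linarith))
    rw [show β * (k:ℝ) + (ρ - γ) = β * k + ρ - γ by ring]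
    field_simp
  -- swap sum and integral
  have hswap : (∑' k, ∫ r in Ioc (0:ℝ) s, F k r) = ∫ r in Ioc (0:ℝ) s, ∑' k, F k r :=
    integral_tsum_of_summable_integral_norm hFint hFsum
  rw [rlInt, intervalIntegral.integral_of_le hs.le,
    setIntegral_congr_fun measurableSet_Ioc hpt, ← hswap, ← tsum_mul_left]
  apply tsum_congr
  intro k
  rw [hFval k]
  have hG1 : Real.Gamma p ≠ 0 := ne_of_gt (Real.Gamma_pos_of_pos hp0)
  have hG2 : Real.Gamma (β * k + ρ) ≠ 0 := ne_of_gt (Real.Gamma_pos_of_pos (hq0 k))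
  have hG3 : Real.Gamma (β * k + ρ + 1 - γ) ≠ 0 :=
    ne_of_gt (Real.Gamma_pos_of_pos (by linarith [hq0 k]))
  rw [show p + (β * k + ρ) - 1 = β * k + ρ - γ by rw [hp]; ring,
    show p + (β * k + ρ) = β * k + ρ + 1 - γ by rw [hp]; ring]
  field_simp

/-- For `β ∈ (0,1)`, `γ ∈ (0,1)`, `ρ > γ`, `a ∈ ℝ`, and
`y_{β,ρ}(t) = t^{ρ−1} E_{β,ρ}(a t^β)`, the function `u = I^{1−γ} y_{β,ρ}`
is differentiable at every `t > 0` with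
`u′(t) = t^{ρ−γ−1} E_{β,ρ−γ}(a t^β)`; i.e. `D^γ y_{β,ρ} = y_{β,ρ−γ}`. -/
theorem mittagLeffler_rl_deriv (β ρ γ a : ℝ)
    (hβ0 : 0 < β) (hβ1 : β < 1) (hγ0 : 0 < γ) (hγ1 : γ < 1) (hργ : γ < ρ) :
    ∀ t > (0:ℝ),
      HasDerivAt
        (fun s => rlInt (1 - γ) (fun r => r ^ (ρ - 1) * mittagLeffler β ρ (a * r ^ β)) s)
        (t ^ (ρ - γ - 1) * mittagLeffler β (ρ - γ) (a * t ^ β)) t := by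
  intro t ht
  have hρ : 0 < ρ := lt_trans hγ0 hργ
  have hργ0 : 0 < ρ - γ := by linarith
  set S : Set ℝ := Ioo (t/2) (2*t) with hS
  have hopen : IsOpen S := isOpen_Ioo
  have hpre : IsPreconnected S := (convex_Ioo _ _).isPreconnected
  have htS : t ∈ S := by
    rw [hS]; exact ⟨by linarith, by linarith⟩
  set g : ℕ → ℝ → ℝ := fun k y => a ^ k * y ^ (β * k + ρ - γ) / Real.Gamma (β * k + ρ + 1 - γ)
    with hg_def
  set g' : ℕ → ℝ → ℝ := fun k y => a ^ k * y ^ (β * k + ρ - γ - 1) / Real.Gamma (β * k + ρ - γ)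
    with hg'_def
  set C : ℝ := max ((t/2) ^ (ρ - γ - 1)) ((2*t) ^ (ρ - γ - 1)) with hC
  set u : ℕ → ℝ := fun k => C * ((|a| * (2*t) ^ β) ^ k / Real.Gamma (β * k + (ρ - γ))) with hu_def
  have he0 : ∀ k : ℕ, (0:ℝ) < β * k + ρ - γ := fun k => by
    have : (0:ℝ) ≤ β * k := by positivity
    linarith
  have hGe : ∀ k : ℕ, (0:ℝ) < Real.Gamma (β * k + ρ - γ) :=
    fun k => Real.Gamma_pos_of_pos (he0 k)
  have hGe1 : ∀ k : ℕ, (0:ℝ) < Real.Gamma (β * k + ρ + 1 - γ) :=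
    fun k => Real.Gamma_pos_of_pos (by linarith [he0 k])
  -- summability of the bound
  have hu : Summable u :=
    (ml_summable (x := |a| * (2*t) ^ β) hβ0 hργ0 (by positivity)).mul_left C
  -- derivatives
  have hg : ∀ (k : ℕ), ∀ y ∈ S, HasDerivAt (g k) (g' k y) y := by
    intro k y hy
    have hy0 : 0 < y := lt_trans (by linarith) hy.1
    set e : ℝ := β * k + ρ - γ with he
    have hde := (Real.hasDerivAt_rpow_const (x := y) (p := e)
      (Or.inl (ne_of_gt hy0))).const_mul (a ^ k / Real.Gamma (β * k + ρ + 1 - γ))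
    have hfun : (fun x : ℝ => a ^ k / Real.Gamma (β * k + ρ + 1 - γ) * x ^ e) = g k := by
      funext x; rw [hg_def]; ring
    rw [hfun] at hde
    refine hde.congr_deriv ?_
    symm
    rw [hg'_def]
    have hGadd : Real.Gamma (β * k + ρ + 1 - γ) = e * Real.Gamma e := by
      rw [show β * (k:ℝ) + ρ + 1 - γ = e + 1 by rw [he]; ring, Real.Gamma_add_one (ne_of_gt (he0 k))]
    beta_reduce
    rw [hGadd]
    have := ne_of_gt (he0 k)
    have := ne_of_gt (hGe k)
    rw [he]
    field_simp
  -- bound on derivatives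
  have hg' : ∀ (k : ℕ), ∀ y ∈ S, ‖g' k y‖ ≤ u k := by
    intro k y hy
    have hy0 : 0 < y := lt_trans (by linarith) hy.1
    have hy2 : y ≤ 2*t := le_of_lt hy.2
    have hyh : t/2 ≤ y := le_of_lt hy.1
    have hCpos : 0 < C := lt_max_of_lt_right (by positivity)
    have hb1 : y ^ (β * k) ≤ (2*t) ^ (β * k) :=
      Real.rpow_le_rpow hy0.le hy2 (by positivity)
    have hb2 : y ^ (ρ - γ - 1) ≤ C := by
      rcases le_or_gt 0 (ρ - γ - 1) with h | h
      · exact le_trans (Real.rpow_le_rpow hy0.le hy2 h) (le_max_right _ _)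
      · exact le_trans (Real.rpow_le_rpow_of_nonpos (by linarith) hyh h.le)
          (le_max_left _ _)
    have hsplit : y ^ (β * k + ρ - γ - 1) = y ^ (β * k) * y ^ (ρ - γ - 1) := by
      rw [← Real.rpow_add hy0]; ring_nf
    rw [hg'_def, hu_def]
    beta_reduce
    rw [Real.norm_eq_abs, abs_div, abs_of_nonneg (hGe k).le, abs_mul, abs_pow,
      abs_of_nonneg (Real.rpow_nonneg hy0.le _), pow_rpow_eq |a| (by linarith) k,
      hsplit]
    rw [show β * (k:ℝ) + (ρ - γ) = β * k + ρ - γ by ring, ← mul_div_assoc,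
      div_le_div_iff_of_pos_right (hGe k)]
    calc |a| ^ k * (y ^ (β * k) * y ^ (ρ - γ - 1))
        ≤ |a| ^ k * ((2*t) ^ (β * k) * C) := by
          apply mul_le_mul_of_nonneg_left _ (by positivity)
          exact mul_le_mul hb1 hb2 (Real.rpow_nonneg hy0.le _) (Real.rpow_nonneg (by positivity) _)
      _ = C * (|a| ^ k * (2*t) ^ (β * k)) := by ring
  -- summability at t
  have hg0 : Summable (fun k => g k t) := by
    apply Summable.of_abs
    apply (ml_summable' (β := β) (c := ρ + 1 - γ) (d := ρ - γ) (x := |a|) hβ0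
      (by linarith) (abs_nonneg a) ht).congr
    intro k
    rw [hg_def]
    beta_reduce
    rw [abs_div, abs_mul, abs_pow, abs_of_nonneg (Real.rpow_nonneg ht.le _),
      abs_of_nonneg (hGe1 k).le,
      show β * (k:ℝ) + (ρ - γ) = β * k + ρ - γ by ring,
      show β * (k:ℝ) + (ρ + 1 - γ) = β * k + ρ + 1 - γ by ring]
  -- termwise differentiation
  have hmain := hasDerivAt_tsum_of_isPreconnected hu hopen hpre hg hg' htS hg0 htS
  have hev : (fun s => rlInt (1 - γ) (fun r => r ^ (ρ - 1) * mittagLeffler β ρ (a * r ^ β)) s)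
      =ᶠ[nhds t] (fun z => ∑' k, g k z) := by
    filter_upwards [hopen.mem_nhds htS] with y hy
    have hy0 : 0 < y := lt_trans (by linarith) hy.1
    exact rlInt_ml_eq hβ0 hγ0 hγ1 hργ hy0
  have hfinal := hmain.congr_of_eventuallyEq hev
  refine hfinal.congr_deriv ?_
  symm
  rw [mittagLeffler, ← tsum_mul_left]
  apply tsum_congr
  intro k
  rw [hg'_def, pow_rpow_eq a ht k]
  beta_reduce
  rw [show t ^ (β * (k:ℝ) + ρ - γ - 1) = t ^ (β * k) * t ^ (ρ - γ - 1) by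
      rw [← Real.rpow_add ht]; ring_nf,
    show β * (k:ℝ) + (ρ - γ) = β * k + ρ - γ by ring]
  ring
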